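/- Let H be a complex Hilbert space and let A ⊆ B(H) be a norm-closed subalgebra possessing a contractive approximate unit contained in its diagonal. Then diag(A⊗K) = (diag A)⊗K; that is, the diagonal of the closed linear span of {E_{ij}(a) : a ∈ A, i,j ∈ ℕ} in B(ℓ²(ℕ,H)) equals the closed linear span of {E_{ij}(d) : d ∈ diag A, i,j ∈ ℕ}. -/

import Mathlib

noncomputable section

open scoped ENNReal

variable {H : Type} [NormedAddCommGroup H] [InnerProductSpace ℂ H] [CompleteSpace H]

abbrev L2 (H : Type) [NormedAddCommGroup H] [InnerProductSpace ℂ H] : Type :=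
  lp (fun _ : ℕ => H) 2

theorem lp_single_add (i : ℕ) (a b : H) :
    lp.single (E := fun _ : ℕ => H) 2 i (a + b) = lp.single 2 i a + lp.single 2 i b := by
  apply lp.ext
  funext k
  by_cases h : k = i
  · subst h
    simp [lp.coeFn_add, lp.single_apply_self]
  · simp [lp.coeFn_add, lp.single_apply_ne 2 i _ h]

/-- The operator `E_{ij}(a)` on `ℓ²(ℕ, H)`: `(E_{ij}(a) x)_k = a (x_j)` if `k = i`, else `0`. -/
def Eij (a : H →L[ℂ] H) (i j : ℕ) : L2 H →L[ℂ] L2 H :=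
  LinearMap.mkContinuous
    { toFun := fun x => lp.single 2 i (a (x j))
      map_add' := fun x y => by
        dsimp only
        rw [lp.coeFn_add, Pi.add_apply, map_add, lp_single_add]
      map_smul' := fun c x => by
        dsimp only
        rw [lp.coeFn_smul, Pi.smul_apply, map_smul, lp.single_smul]
        rfl }
    ‖a‖ (fun x => by
      have h1 : ‖lp.single (E := fun _ : ℕ => H) 2 i (a (x j))‖ = ‖a (x j)‖ := by
        simpa using lp.norm_single (p := 2) (by norm_num) (fun _ : ℕ => a (x j)) i
      calc ‖lp.single (E := fun _ : ℕ => H) 2 i (a (x j))‖ = ‖a (x j)‖ := h1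
        _ ≤ ‖a‖ * ‖x j‖ := a.le_opNorm _
        _ ≤ ‖a‖ * ‖x‖ := by
            gcongr
            exact lp.norm_apply_le_norm (by norm_num) x j)

@[simp] theorem Eij_apply (a : H →L[ℂ] H) (i j : ℕ) (x : L2 H) :
    Eij a i j x = lp.single 2 i (a (x j)) := rfl

theorem amplify_memℓp (S : H →L[ℂ] H) (x : L2 H) : Memℓp (fun k => S (x k)) 2 := by
  have ht : (0 : ℝ) < (2 : ℝ≥0∞).toReal := by norm_num
  apply memℓp_gen
  have hx : Summable fun k => ‖x k‖ ^ (2 : ℝ≥0∞).toReal := (lp.memℓp x).summable ht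
  refine Summable.of_nonneg_of_le (fun k => Real.rpow_nonneg (norm_nonneg _) _)
    (fun k => ?_) (hx.mul_left (‖S‖ ^ (2 : ℝ≥0∞).toReal))
  calc ‖S (x k)‖ ^ (2 : ℝ≥0∞).toReal
      ≤ (‖S‖ * ‖x k‖) ^ (2 : ℝ≥0∞).toReal :=
        Real.rpow_le_rpow (norm_nonneg _) (S.le_opNorm _) ht.le
    _ = ‖S‖ ^ (2 : ℝ≥0∞).toReal * ‖x k‖ ^ (2 : ℝ≥0∞).toReal :=
        Real.mul_rpow (norm_nonneg _) (norm_nonneg _)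

/-- The amplification `S ⊗ I` on `ℓ²(ℕ, H)`: `((S ⊗ I) x)_k = S (x_k)`. -/
def amplify (S : H →L[ℂ] H) : L2 H →L[ℂ] L2 H :=
  LinearMap.mkContinuous
    { toFun := fun x => (⟨fun k => S (x k), amplify_memℓp S x⟩ : L2 H)
      map_add' := fun x y => by
        apply lp.ext
        funext k
        show S ((x + y) k) = (_ + _ : L2 H) k
        rw [lp.coeFn_add, lp.coeFn_add, Pi.add_apply, Pi.add_apply, map_add]
      map_smul' := fun c x => by
        apply lp.ext
        funext k
        show S ((c • x) k) = (c • _ : L2 H) k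
        rw [lp.coeFn_smul, lp.coeFn_smul, Pi.smul_apply, Pi.smul_apply, map_smul] }
    ‖S‖ (fun x => by
      dsimp only
      have ht : (0 : ℝ) < (2 : ℝ≥0∞).toReal := by norm_num
      set t := (2 : ℝ≥0∞).toReal with htdef
      rw [← Real.rpow_le_rpow_iff (norm_nonneg _) (mul_nonneg (norm_nonneg S) (norm_nonneg x)) ht,
        Real.mul_rpow (norm_nonneg S) (norm_nonneg x), lp.norm_rpow_eq_tsum ht,
        lp.norm_rpow_eq_tsum ht x, ← tsum_mul_left]
      have hsum1 : Summable fun k => ‖S (x k)‖ ^ t :=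
        ((amplify_memℓp S x).summable ht)
      have hsum2 : Summable fun k => ‖S‖ ^ t * ‖x k‖ ^ t :=
        ((lp.memℓp x).summable ht).mul_left _
      refine Summable.tsum_le_tsum (fun k => ?_) hsum1 hsum2
      calc ‖S (x k)‖ ^ t ≤ (‖S‖ * ‖x k‖) ^ t :=
            Real.rpow_le_rpow (norm_nonneg _) (S.le_opNorm _) ht.le
        _ = ‖S‖ ^ t * ‖x k‖ ^ t := Real.mul_rpow (norm_nonneg _) (norm_nonneg _))

@[simp] theorem amplify_apply (S : H →L[ℂ] H) (x : L2 H) (k : ℕ) :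
    amplify S x k = S (x k) := rfl

/-- The diagonal `diag A := A ∩ A*` of a set of Hilbert-space operators. -/
def diagSet {K : Type*} [NormedAddCommGroup K] [InnerProductSpace ℂ K] [CompleteSpace K]
    (A : Set (K →L[ℂ] K)) : Set (K →L[ℂ] K) :=
  {a | a ∈ A ∧ ContinuousLinearMap.adjoint a ∈ A}

/-- `A ⊗ K`: the closed linear span of the operators `E_{ij}(a)`, `a ∈ A`, `i j : ℕ`,
inside `B(ℓ²(ℕ, H))`.  This realizes the spatial tensor product of `A` with the compact
operators on `ℓ²(ℕ)`. -/
def tensorK (A : Set (H →L[ℂ] H)) : Set (L2 H →L[ℂ] L2 H) :=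
  closure (↑(Submodule.span ℂ
    {T : L2 H →L[ℂ] L2 H | ∃ a ∈ A, ∃ i j : ℕ, T = Eij a i j}) : Set (L2 H →L[ℂ] L2 H))

open ContinuousLinearMap in
/-- Evaluation at coordinate `j` as a continuous linear map. -/
def ev (j : ℕ) : L2 H →L[ℂ] H :=
  LinearMap.mkContinuous
    { toFun := fun x => x j
      map_add' := fun x y => by simp [lp.coeFn_add]
      map_smul' := fun c x => by simp [lp.coeFn_smul] }
    1 (fun x => by show ‖x j‖ ≤ 1 * ‖x‖; simpa using lp.norm_apply_le_norm (by norm_num) x j)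

@[simp] theorem ev_apply (j : ℕ) (x : L2 H) : ev j x = x j := rfl

theorem ev_norm_le (j : ℕ) : ‖(ev (H := H) j)‖ ≤ 1 :=
  LinearMap.mkContinuous_norm_le _ zero_le_one _

/-- `lp.single` as a continuous linear map. -/
def sgl (i : ℕ) : H →L[ℂ] L2 H :=
  LinearMap.mkContinuous
    { toFun := fun a => lp.single 2 i a
      map_add' := fun a b => lp_single_add i a b
      map_smul' := fun c a => by simp }
    1 (fun a => by
      simpa using (lp.norm_single (p := 2) (by norm_num) (fun _ : ℕ => a) i).le)

@[simp] theorem sgl_apply (i : ℕ) (a : H) : sgl i a = lp.single 2 i a := rfl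

theorem sgl_norm_le (i : ℕ) : ‖(sgl (H := H) i)‖ ≤ 1 :=
  LinearMap.mkContinuous_norm_le _ zero_le_one _

open ContinuousLinearMap in
theorem adjoint_sgl (i : ℕ) :
    ContinuousLinearMap.adjoint (sgl (H := H) i) = ev i := by
  symm
  rw [ContinuousLinearMap.eq_adjoint_iff]
  intro x u
  simp [lp.inner_single_right]

open ContinuousLinearMap in
theorem adjoint_ev (j : ℕ) :
    ContinuousLinearMap.adjoint (ev (H := H) j) = sgl j := by
  rw [← adjoint_sgl, ContinuousLinearMap.adjoint_adjoint]

theorem Eij_eq_comp (a : H →L[ℂ] H) (i j : ℕ) :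
    Eij a i j = (sgl i).comp (a.comp (ev j)) := by
  ext x; rfl

theorem adjoint_Eij (a : H →L[ℂ] H) (i j : ℕ) :
    ContinuousLinearMap.adjoint (Eij a i j) = Eij (ContinuousLinearMap.adjoint a) j i := by
  rw [Eij_eq_comp, Eij_eq_comp, ContinuousLinearMap.adjoint_comp,
    ContinuousLinearMap.adjoint_comp, adjoint_sgl, adjoint_ev, ContinuousLinearMap.comp_assoc]
theorem comp_norm_le_of_contr {E F G : Type*} [NormedAddCommGroup E] [NormedAddCommGroup F]
    [NormedAddCommGroup G] [NormedSpace ℂ E] [NormedSpace ℂ F] [NormedSpace ℂ G]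
    (f : F →L[ℂ] G) (T : E →L[ℂ] F) (hf : ‖f‖ ≤ 1) : ‖f.comp T‖ ≤ ‖T‖ :=
  (ContinuousLinearMap.opNorm_comp_le _ _).trans
    (by simpa using mul_le_mul_of_nonneg_right hf (norm_nonneg T))

theorem norm_comp_le_of_contr {E F G : Type*} [NormedAddCommGroup E] [NormedAddCommGroup F]
    [NormedAddCommGroup G] [NormedSpace ℂ E] [NormedSpace ℂ F] [NormedSpace ℂ G]
    (T : F →L[ℂ] G) (f : E →L[ℂ] F) (hf : ‖f‖ ≤ 1) : ‖T.comp f‖ ≤ ‖T‖ :=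
  (ContinuousLinearMap.opNorm_comp_le _ _).trans
    (by simpa using mul_le_mul_of_nonneg_left hf (norm_nonneg T))

/-- The `(i,j)` matrix entry of an operator on `ℓ²(ℕ, H)`, as a continuous linear map. -/
def entry (i j : ℕ) : (L2 H →L[ℂ] L2 H) →L[ℂ] (H →L[ℂ] H) :=
  LinearMap.mkContinuous
    { toFun := fun T => (ev i).comp (T.comp (sgl j))
      map_add' := fun T S => by ext u; simp
      map_smul' := fun c T => by ext u; simp }
    1 (fun T => by
      show ‖(ev i).comp (T.comp (sgl j))‖ ≤ 1 * ‖T‖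
      rw [one_mul]
      exact (comp_norm_le_of_contr _ _ (ev_norm_le i)).trans
        (norm_comp_le_of_contr _ _ (sgl_norm_le j)))

@[simp] theorem entry_apply (i j : ℕ) (T : L2 H →L[ℂ] L2 H) (u : H) :
    entry i j T u = (T (lp.single 2 j u)) i := rfl

theorem entry_Eij (i j k l : ℕ) (a : H →L[ℂ] H) :
    entry i j (Eij a k l) = if k = i ∧ l = j then a else 0 := by
  ext u
  simp only [entry_apply, Eij_apply]
  by_cases hl : l = j
  · subst hl
    rw [lp.single_apply_self]
    by_cases hk : k = i
    · subst hk
      rw [lp.single_apply_self]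
      simp
    · rw [lp.single_apply_ne _ _ _ (Ne.symm hk)]
      simp [hk]
  · rw [lp.single_apply_ne _ _ _ hl, map_zero]
    by_cases hk : k = i
    · subst hk
      rw [lp.single_apply_self]
      simp [hl]
    · rw [lp.single_apply_ne _ _ _ (Ne.symm hk)]
      simp [hk]
theorem entry_adjoint (i j : ℕ) (T : L2 H →L[ℂ] L2 H) :
    entry i j (ContinuousLinearMap.adjoint T) = ContinuousLinearMap.adjoint (entry j i T) := by
  have h1 : entry j i T = (ev j).comp (T.comp (sgl i)) := rfl
  have h2 : entry i j (ContinuousLinearMap.adjoint T)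
      = (ev i).comp ((ContinuousLinearMap.adjoint T).comp (sgl j)) := rfl
  rw [h1, h2, ContinuousLinearMap.adjoint_comp, ContinuousLinearMap.adjoint_comp,
    adjoint_sgl, adjoint_ev, ContinuousLinearMap.comp_assoc]

theorem entry_mem_of_mem_tensorK (A : NonUnitalSubalgebra ℂ (H →L[ℂ] H))
    (hA : IsClosed (A : Set (H →L[ℂ] H))) {S : Set (H →L[ℂ] H)} (hS : S ⊆ A) (i j : ℕ)
    {T : L2 H →L[ℂ] L2 H} (hT : T ∈ tensorK S) : entry i j T ∈ A := by
  have hclosed : IsClosed ((entry (H := H) i j) ⁻¹' (A : Set (H →L[ℂ] H))) :=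
    hA.preimage (entry i j).continuous
  have hspan : (↑(Submodule.span ℂ {T : L2 H →L[ℂ] L2 H | ∃ a ∈ S, ∃ k l : ℕ, T = Eij a k l})
      : Set (L2 H →L[ℂ] L2 H)) ⊆ (entry (H := H) i j) ⁻¹' (A : Set (H →L[ℂ] H)) := by
    have hle : Submodule.span ℂ {T : L2 H →L[ℂ] L2 H | ∃ a ∈ S, ∃ k l : ℕ, T = Eij a k l} ≤
        (A.toSubmodule).comap ((entry (H := H) i j) : (L2 H →L[ℂ] L2 H) →ₗ[ℂ] (H →L[ℂ] H)) := by
      rw [Submodule.span_le]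
      rintro _ ⟨a, ha, k, l, rfl⟩
      show entry i j (Eij a k l) ∈ A
      rw [entry_Eij]
      split
      · exact hS ha
      · exact zero_mem A
    intro T hT
    exact hle hT
  exact closure_minimal hspan hclosed hT
/-- Truncation to the first `n` coordinates. -/
def Pfin (n : ℕ) : L2 H →L[ℂ] L2 H := ∑ i ∈ Finset.range n, (sgl i).comp (ev i)

theorem Pfin_apply (n : ℕ) (x : L2 H) (k : ℕ) :
    Pfin n x k = if k < n then x k else 0 := by
  have h : Pfin n x = ∑ i ∈ Finset.range n, lp.single 2 i (x i) := by
    simp [Pfin, ContinuousLinearMap.sum_apply]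
  rw [h]
  simp only [lp.coeFn_sum, Finset.sum_apply, lp.single_apply, Finset.sum_dite_eq,
    Finset.mem_range, Pi.single_apply, Finset.sum_ite_eq, Finset.sum_ite_eq']

theorem Pfin_norm_apply_le (n : ℕ) (x : L2 H) : ‖Pfin n x‖ ≤ ‖x‖ := by
  have ht : (0 : ℝ) < (2 : ℝ≥0∞).toReal := by norm_num
  rw [← Real.rpow_le_rpow_iff (norm_nonneg _) (norm_nonneg _) ht,
    lp.norm_rpow_eq_tsum ht, lp.norm_rpow_eq_tsum ht]
  refine Summable.tsum_le_tsum (fun k => ?_) ((lp.memℓp _).summable ht) ((lp.memℓp x).summable ht)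
  rw [Pfin_apply]
  split
  · exact le_rfl
  · simpa [Real.zero_rpow ht.ne'] using Real.rpow_nonneg (norm_nonneg (x k)) _

theorem Pfin_norm_le (n : ℕ) : ‖(Pfin (H := H) n)‖ ≤ 1 :=
  ContinuousLinearMap.opNorm_le_bound _ zero_le_one
    (fun x => by simpa using Pfin_norm_apply_le n x)

theorem Pfin_single (n i : ℕ) (hi : i < n) (v : H) :
    Pfin n (lp.single 2 i v) = lp.single 2 i v := by
  apply lp.ext
  funext k
  rw [Pfin_apply]
  split
  · rfl
  · next h => rw [lp.single_apply_ne _ _ _ (by omega : k ≠ i)]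

/-- Compression of an operator to the first `n` coordinates. -/
def Phi (n : ℕ) (T : L2 H →L[ℂ] L2 H) : L2 H →L[ℂ] L2 H :=
  (Pfin n).comp (T.comp (Pfin n))

theorem Phi_norm_le (n : ℕ) (T : L2 H →L[ℂ] L2 H) : ‖Phi n T‖ ≤ ‖T‖ :=
  (comp_norm_le_of_contr _ _ (Pfin_norm_le n)).trans
    (norm_comp_le_of_contr _ _ (Pfin_norm_le n))

theorem Phi_eq_sum (n : ℕ) (T : L2 H →L[ℂ] L2 H) :
    Phi n T = ∑ i ∈ Finset.range n, ∑ j ∈ Finset.range n, Eij (entry i j T) i j := by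
  refine ContinuousLinearMap.ext fun x => ?_
  show Pfin n (T (Pfin n x)) = _
  have h : Pfin n x = ∑ j ∈ Finset.range n, lp.single 2 j (x j) := by
    simp [Pfin, ContinuousLinearMap.sum_apply]
  rw [h, map_sum]
  simp only [Pfin, ContinuousLinearMap.sum_apply, ContinuousLinearMap.coe_comp',
    Function.comp_apply, map_sum, ContinuousLinearMap.coe_sum', Finset.sum_apply]
  rw [Finset.sum_comm]
  rfl

theorem Phi_Eij (n i j : ℕ) (hi : i < n) (hj : j < n) (a : H →L[ℂ] H) :
    Phi n (Eij a i j) = Eij a i j := by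
  refine ContinuousLinearMap.ext fun x => ?_
  show Pfin n (Eij a i j (Pfin n x)) = Eij a i j x
  rw [Eij_apply, Pfin_apply _ x j, if_pos hj, Pfin_single n i hi, Eij_apply]
theorem Phi_add (n : ℕ) (x y : L2 H →L[ℂ] L2 H) : Phi n (x + y) = Phi n x + Phi n y := by
  simp [Phi, ContinuousLinearMap.comp_add, ContinuousLinearMap.add_comp]

theorem Phi_smul (n : ℕ) (c : ℂ) (x : L2 H →L[ℂ] L2 H) : Phi n (c • x) = c • Phi n x := by
  simp [Phi, ContinuousLinearMap.comp_smulₛₗ, ContinuousLinearMap.smul_comp]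

theorem Phi_eventually {S : Set (H →L[ℂ] H)} {T : L2 H →L[ℂ] L2 H}
    (hT : T ∈ Submodule.span ℂ {T : L2 H →L[ℂ] L2 H | ∃ a ∈ S, ∃ i j : ℕ, T = Eij a i j}) :
    ∀ᶠ n in Filter.atTop, Phi n T = T := by
  induction hT using Submodule.span_induction with
  | mem x hx =>
    obtain ⟨a, _, i, j, rfl⟩ := hx
    filter_upwards [Filter.eventually_gt_atTop (max i j)] with n hn
    exact Phi_Eij n i j ((le_max_left i j).trans_lt hn) ((le_max_right i j).trans_lt hn) a
  | zero =>
    exact Filter.Eventually.of_forall fun n => by simp [Phi]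
  | add x y _ _ hx hy =>
    filter_upwards [hx, hy] with n h1 h2
    rw [Phi_add, h1, h2]
  | smul c x _ hx =>
    filter_upwards [hx] with n h1
    rw [Phi_smul, h1]

theorem Phi_tendsto {S : Set (H →L[ℂ] H)} {T : L2 H →L[ℂ] L2 H} (hT : T ∈ tensorK S) :
    Filter.Tendsto (fun n => Phi n T) Filter.atTop (nhds T) := by
  rw [Metric.tendsto_atTop]
  intro ε hε
  obtain ⟨R, hRmem, hRd⟩ := Metric.mem_closure_iff.mp hT (ε / 3) (by positivity)
  obtain ⟨N, hN⟩ := Filter.eventually_atTop.mp (Phi_eventually hRmem)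
  refine ⟨N, fun n hn => ?_⟩
  have h1 : Phi n T - Phi n R = Phi n (T - R) := by
    simp [Phi, ContinuousLinearMap.comp_sub, ContinuousLinearMap.sub_comp]
  calc dist (Phi n T) T ≤ dist (Phi n T) (Phi n R) + dist (Phi n R) T := dist_triangle _ _ _
    _ = ‖Phi n T - Phi n R‖ + ‖Phi n R - T‖ := by rw [dist_eq_norm, dist_eq_norm]
    _ ≤ ‖T - R‖ + ‖R - T‖ := by
        rw [h1, hN n hn]
        gcongr
        exact Phi_norm_le n (T - R)
    _ < ε := by
        rw [norm_sub_rev T R]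
        have : ‖R - T‖ < ε / 3 := by rw [← dist_eq_norm]; exact dist_comm R T ▸ hRd
        linarith
theorem mem_tensorK_of_tendsto {S : Set (H →L[ℂ] H)} {T : L2 H →L[ℂ] L2 H}
    (F : ℕ → L2 H →L[ℂ] L2 H)
    (hF : ∀ n, F n ∈ Submodule.span ℂ {T : L2 H →L[ℂ] L2 H | ∃ a ∈ S, ∃ i j : ℕ, T = Eij a i j})
    (hFT : Filter.Tendsto F Filter.atTop (nhds T)) : T ∈ tensorK S :=
  mem_closure_of_tendsto hFT (Filter.Eventually.of_forall hF)

theorem tensorK_mono {S1 S2 : Set (H →L[ℂ] H)} (h : S1 ⊆ S2) : tensorK S1 ⊆ tensorK S2 := by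
  apply closure_mono
  exact Submodule.span_mono (by rintro _ ⟨a, ha, i, j, rfl⟩; exact ⟨a, h ha, i, j, rfl⟩)

theorem adjoint_mem_tensorK {S : Set (H →L[ℂ] H)} (hS : ∀ a ∈ S, ContinuousLinearMap.adjoint a ∈ S)
    {T : L2 H →L[ℂ] L2 H} (hT : T ∈ tensorK S) :
    ContinuousLinearMap.adjoint T ∈ tensorK S := by
  set M := (Submodule.span ℂ
    {T : L2 H →L[ℂ] L2 H | ∃ a ∈ S, ∃ i j : ℕ, T = Eij a i j}).topologicalClosure with hM
  have hMset : (M : Set (L2 H →L[ℂ] L2 H)) = tensorK S := Submodule.topologicalClosure_coe _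
  have hD : IsClosed {T : L2 H →L[ℂ] L2 H | ContinuousLinearMap.adjoint T ∈ M} := by
    have : {T : L2 H →L[ℂ] L2 H | ContinuousLinearMap.adjoint T ∈ M} =
        (fun T : L2 H →L[ℂ] L2 H => ContinuousLinearMap.adjoint T) ⁻¹'
          (M : Set (L2 H →L[ℂ] L2 H)) := rfl
    rw [this]
    exact (Submodule.isClosed_topologicalClosure _).preimage
      (ContinuousLinearMap.adjoint (E := L2 H) (F := L2 H)).continuous
  have hsub : (↑(Submodule.span ℂ {T : L2 H →L[ℂ] L2 H | ∃ a ∈ S, ∃ i j : ℕ, T = Eij a i j})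
      : Set (L2 H →L[ℂ] L2 H)) ⊆ {T | ContinuousLinearMap.adjoint T ∈ M} := by
    intro T hTmem
    induction hTmem using Submodule.span_induction with
    | mem x hx =>
      obtain ⟨a, ha, i, j, rfl⟩ := hx
      show ContinuousLinearMap.adjoint (Eij a i j) ∈ M
      rw [adjoint_Eij]
      exact (Submodule.le_topologicalClosure _)
        (Submodule.subset_span ⟨_, hS a ha, j, i, rfl⟩)
    | zero => show ContinuousLinearMap.adjoint (0 : L2 H →L[ℂ] L2 H) ∈ M; simp [map_zero]
    | add x y _ _ hx hy =>
      show ContinuousLinearMap.adjoint (x + y) ∈ M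
      rw [map_add]
      exact M.add_mem hx hy
    | smul c x _ hx =>
      show ContinuousLinearMap.adjoint (c • x) ∈ M
      rw [map_smulₛₗ]
      exact M.smul_mem _ hx
  have := closure_minimal hsub hD hT
  rw [← hMset]
  exact this
/-- If `A ⊆ B(H)` is a norm-closed subalgebra possessing a contractive
approximate unit contained in its diagonal, then `diag (A ⊗ K) = (diag A) ⊗ K`. -/
theorem stable_iso_stmt1
    (A : NonUnitalSubalgebra ℂ (H →L[ℂ] H)) (hA : IsClosed (A : Set (H →L[ℂ] H)))
    (ι : Type) [SemilatticeSup ι] [Nonempty ι] (e : ι → H →L[ℂ] H)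
    (he_mem : ∀ l, e l ∈ diagSet (A : Set (H →L[ℂ] H)))
    (he_contr : ∀ l, ‖e l‖ ≤ 1)
    (he_left : ∀ a ∈ A, Filter.Tendsto (fun l => ‖e l * a - a‖) Filter.atTop (nhds 0))
    (he_right : ∀ a ∈ A, Filter.Tendsto (fun l => ‖a * e l - a‖) Filter.atTop (nhds 0)) :
    diagSet (tensorK (A : Set (H →L[ℂ] H))) = tensorK (diagSet (A : Set (H →L[ℂ] H))) := by
  apply Set.Subset.antisymm
  · rintro T ⟨hT1, hT2⟩
    have hent : ∀ i j : ℕ, entry i j T ∈ diagSet (A : Set (H →L[ℂ] H)) := fun i j =>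
      ⟨entry_mem_of_mem_tensorK A hA subset_rfl i j hT1, by
        rw [← entry_adjoint j i T]
        exact entry_mem_of_mem_tensorK A hA subset_rfl j i hT2⟩
    refine mem_tensorK_of_tendsto (fun n => Phi n T) (fun n => ?_) (Phi_tendsto hT1)
    show Phi n T ∈ _
    rw [Phi_eq_sum]
    refine Submodule.sum_mem _ fun i _ => Submodule.sum_mem _ fun j _ => ?_
    exact Submodule.subset_span ⟨entry i j T, hent i j, i, j, rfl⟩
  · intro T hT
    have hstar : ∀ a ∈ diagSet (A : Set (H →L[ℂ] H)),
        ContinuousLinearMap.adjoint a ∈ diagSet (A : Set (H →L[ℂ] H)) := fun a ha =>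
      ⟨ha.2, by rw [ContinuousLinearMap.adjoint_adjoint]; exact ha.1⟩
    exact ⟨tensorK_mono (fun a ha => ha.1) hT,
      tensorK_mono (fun a ha => ha.1) (adjoint_mem_tensorK hstar hT)⟩
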